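/- arXiv:2401.03874 — 5 statements merged into one kernel-verified Lean document; each statement's English description precedes it below -/
import Mathlib

section
/- Let n ≥ 3. Then for every exponent N ≥ 1, C^N ≢ −I (mod F_{2n}), where C = [[0,1],[1,1]]. -/
private lemma fibMatAux (m : ℕ) : ∀ N : ℕ,
    (!![0, 1; 1, 1] : Matrix (Fin 2) (Fin 2) (ZMod m)) ^ (N + 1) =
      !![(Nat.fib N : ZMod m), Nat.fib (N + 1); Nat.fib (N + 1), Nat.fib (N + 2)] := by
  intro N
  induction N with
  | zero => simp [pow_one]
  | succ k ih =>
    rw [pow_succ, ih]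
    have h3 : Nat.fib (k + 3) = Nat.fib (k + 1) + Nat.fib (k + 2) := by
      rw [Nat.fib_add_two]
    have h2 : Nat.fib (k + 2) = Nat.fib k + Nat.fib (k + 1) := Nat.fib_add_two
    ext i j
    fin_cases i <;> fin_cases j <;>
      simp [Matrix.mul_apply, Fin.sum_univ_two, h3, h2]

theorem companion_pow_ne_neg_one_mod_fib_even (n : ℕ) (hn : 3 ≤ n) :
    ∀ N : ℕ, 1 ≤ N →
      (!![0, 1; 1, 1] : Matrix (Fin 2) (Fin 2) (ZMod (Nat.fib (2 * n)))) ^ N ≠ -1 := by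
  intro N hN hEq
  have hF8 : 8 ≤ Nat.fib (2 * n) := by
    have : Nat.fib 6 ≤ Nat.fib (2 * n) := Nat.fib_mono (by omega)
    simpa [show Nat.fib 6 = 8 from rfl] using this
  -- entry (0,1) of C^N is fib N, which must be 0 mod fib (2n)
  have hform := fibMatAux (Nat.fib (2 * n)) (N - 1)
  rw [Nat.sub_add_cancel hN] at hform
  have hfibN0 : ((Nat.fib N : ZMod (Nat.fib (2 * n)))) = 0 := by
    have h1 : N - 1 + 1 = N := by omega
    have := congrFun (congrFun (hform.symm.trans hEq) 0) 1
    simpa [h1] using this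
  have hdvd : Nat.fib (2 * n) ∣ Nat.fib N :=
    (ZMod.natCast_eq_zero_iff _ _).mp hfibN0
  -- hence 2n ∣ N
  have hgcd : Nat.fib (Nat.gcd (2 * n) N) = Nat.fib (2 * n) := by
    rw [Nat.fib_gcd]; exact Nat.gcd_eq_left hdvd
  have hg2 : 2 ≤ Nat.gcd (2 * n) N := by
    by_contra h
    have hle : Nat.gcd (2 * n) N ≤ 2 := by omega
    have h1 : Nat.fib (Nat.gcd (2 * n) N) ≤ 1 := by
      have := Nat.fib_mono hle
      simpa using this
    omega
  have hgeq : Nat.gcd (2 * n) N = 2 * n := by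
    have hgle : Nat.gcd (2 * n) N ≤ 2 * n :=
      Nat.le_of_dvd (by omega) (Nat.gcd_dvd_left _ _)
    by_contra h
    have : Nat.fib (Nat.gcd (2 * n) N) < Nat.fib (2 * n) :=
      (Nat.fib_lt_fib hg2).mpr (by omega)
    omega
  obtain ⟨k, hk⟩ : 2 * n ∣ N := hgeq ▸ Nat.gcd_dvd_right (2 * n) N
  -- C^(2n) = fib(2n-1) • 1
  have hCpow : (!![0, 1; 1, 1] : Matrix (Fin 2) (Fin 2) (ZMod (Nat.fib (2 * n)))) ^ (2 * n)
      = (Nat.fib (2 * n - 1) : ZMod (Nat.fib (2 * n))) • 1 := by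
    have h2n : 2 * n - 1 + 1 = 2 * n := by omega
    have hform2 := fibMatAux (Nat.fib (2 * n)) (2 * n - 1)
    rw [h2n] at hform2
    have e1 : ((Nat.fib (2 * n) : ZMod (Nat.fib (2 * n)))) = 0 := ZMod.natCast_self _
    have e2 : ((Nat.fib (2 * n - 1 + 2) : ZMod (Nat.fib (2 * n))))
        = (Nat.fib (2 * n - 1) : ZMod (Nat.fib (2 * n))) := by
      have h3 := Nat.fib_add_two (n := 2 * n - 1)
      have i2 : 2 * n - 1 + 1 = 2 * n := by omega
      rw [i2] at h3
      rw [h3]; push_cast; rw [ZMod.natCast_self]; ring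
    rw [hform2, e1, e2]
    ext i j
    fin_cases i <;> fin_cases j <;> simp [Matrix.one_apply]
  -- fib(2n-1)^2 = 1 via determinants
  have ha2 : ((Nat.fib (2 * n - 1) : ZMod (Nat.fib (2 * n)))) ^ 2 = 1 := by
    have h1 : ((!![0, 1; 1, 1] : Matrix (Fin 2) (Fin 2) (ZMod (Nat.fib (2 * n)))) ^ (2 * n)).det
        = 1 := by
      rw [Matrix.det_pow]
      norm_num [Matrix.det_fin_two_of, pow_mul]
    rw [hCpow, Matrix.det_smul, Matrix.det_one] at h1
    simpa using h1
  -- C^N = fib(2n-1)^k • 1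
  have hCN : (!![0, 1; 1, 1] : Matrix (Fin 2) (Fin 2) (ZMod (Nat.fib (2 * n)))) ^ N
      = ((Nat.fib (2 * n - 1) : ZMod (Nat.fib (2 * n))) ^ k) • 1 := by
    rw [hk, pow_mul, hCpow, smul_pow, one_pow]
  rw [hCN] at hEq
  have hak : ((Nat.fib (2 * n - 1) : ZMod (Nat.fib (2 * n)))) ^ k = -1 := by
    have := congrFun (congrFun hEq 0) 0
    simpa [Matrix.smul_apply, Matrix.one_apply] using this
  have hne1 : (1 : ZMod (Nat.fib (2 * n))) ≠ -1 := by
    intro h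
    have h2 : ((2 : ℕ) : ZMod (Nat.fib (2 * n))) = 0 := by
      push_cast; linear_combination h
    have := Nat.le_of_dvd (by norm_num) ((ZMod.natCast_eq_zero_iff 2 _).mp h2)
    omega
  have hnea : ((Nat.fib (2 * n - 1) : ZMod (Nat.fib (2 * n)))) ≠ -1 := by
    intro h
    have hz : ((Nat.fib (2 * n - 1) + 1 : ℕ) : ZMod (Nat.fib (2 * n))) = 0 := by
      push_cast; linear_combination h
    have hle := Nat.le_of_dvd (by omega) ((ZMod.natCast_eq_zero_iff _ _).mp hz)
    -- fib (2n-1) + 2 ≤ fib 2n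
    have hsplit := Nat.fib_add_two (n := 2 * n - 2)
    have i1 : 2 * n - 2 + 2 = 2 * n := by omega
    have i2 : 2 * n - 2 + 1 = 2 * n - 1 := by omega
    rw [i1, i2] at hsplit
    have hfib4 : 3 ≤ Nat.fib (2 * n - 2) := by
      have : Nat.fib 4 ≤ Nat.fib (2 * n - 2) := Nat.fib_mono (by omega)
      simpa [show Nat.fib 4 = 3 from rfl] using this
    omega
  rcases Nat.even_or_odd k with ⟨q, hq⟩ | ⟨q, hq⟩
  · rw [hq, ← two_mul, pow_mul, ha2, one_pow] at hak
    exact hne1 hak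
  · rw [hq, pow_add, pow_mul, ha2, one_pow, pow_one, one_mul] at hak
    exact hnea hak
end

section
/- Let q ≠ 5 be a prime and C = [[0,1],[1,1]]. If C^{2ℓ} ≡ I (mod q) for some odd positive integer ℓ, then 5 is a quadratic residue modulo q. -/
theorem five_is_qr_of_companion_pow_odd_eq_one (q : ℕ) (hq : q.Prime) (hq5 : q ≠ 5)
    (ℓ : ℕ) (hℓpos : 0 < ℓ) (hℓodd : Odd ℓ)
    (h : (!![0, 1; 1, 1] : Matrix (Fin 2) (Fin 2) (ZMod q)) ^ (2 * ℓ) = 1) :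
    ∃ b : ZMod q, b ^ 2 = 5 := by
  rcases eq_or_ne q 2 with rfl | hq2
  · exact ⟨1, by decide⟩
  haveI : Fact q.Prime := ⟨hq⟩
  have h2 : (2 : ZMod q) ≠ 0 := by
    intro hc
    have hdvd : q ∣ 2 := by
      have : ((2 : ℕ) : ZMod q) = 0 := by exact_mod_cast hc
      exact (ZMod.natCast_eq_zero_iff 2 q).mp this
    exact hq2 ((Nat.prime_dvd_prime_iff_eq hq Nat.prime_two).mp hdvd)
  set C : Matrix (Fin 2) (Fin 2) (ZMod q) := !![0, 1; 1, 1] with hC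
  have hform : ∀ n : ℕ, ∃ x y : ZMod q, C ^ n = !![x, y; y, x + y] := by
    intro n
    induction n with
    | zero => exact ⟨1, 0, by simp [Matrix.one_fin_two]⟩
    | succ n ih =>
      obtain ⟨x, y, hxy⟩ := ih
      refine ⟨y, x + y, ?_⟩
      rw [pow_succ, hxy, hC, Matrix.mul_fin_two]
      ring_nf
  obtain ⟨a, b, hab⟩ := hform ℓ
  have hsq : (C ^ ℓ) ^ 2 = 1 := by
    rw [← pow_mul, mul_comm]; exact h
  have hdet : (C ^ ℓ).det = -1 := by
    rw [Matrix.det_pow]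
    have : C.det = -1 := by simp [hC, Matrix.det_fin_two_of]
    rw [this, hℓodd.neg_one_pow]
  rw [hab] at hsq hdet
  rw [Matrix.det_fin_two_of] at hdet
  rw [sq, Matrix.mul_fin_two, Matrix.one_fin_two] at hsq
  have h00 : a * a + b * b = 1 := by
    have := congrFun (congrFun hsq 0) 0; simpa using this
  have h01 : a * b + b * (a + b) = 0 := by
    have := congrFun (congrFun hsq 0) 1; simpa using this
  have hbd : b * (2 * a + b) = 0 := by linear_combination h01
  rcases mul_eq_zero.mp hbd with hb | hb
  · exfalso
    rw [hb] at h00 hdet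
    exact h2 (by linear_combination hdet - h00)
  · have hb' : b = -(2 * a) := by linear_combination hb
    have h5 : 5 * a ^ 2 = 1 := by
      rw [hb'] at h00; linear_combination h00
    have ha : a ≠ 0 := by
      intro h0; rw [h0] at h5; simpa using h5
    refine ⟨a⁻¹, ?_⟩
    field_simp
    linear_combination -h5
end

section
/- Let q be a prime with q ≡ ±2 (mod 5). Then q divides F_{q+1}, where F denotes the Fibonacci sequence. -/
open Polynomial

private lemma aux_two_ns : ¬ IsSquare ((2 : ℕ) : ZMod 5) := by decide
private lemma aux_three_ns : ¬ IsSquare ((3 : ℕ) : ZMod 5) := by decide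

theorem prime_dvd_fib_succ_of_pm_two_mod_five (q : ℕ) (hq : q.Prime)
    (h5 : q % 5 = 2 ∨ q % 5 = 3) :
    q ∣ Nat.fib (q + 1) := by
  haveI : Fact q.Prime := ⟨hq⟩
  by_cases hq2 : q = 2
  · subst hq2; decide
  -- q is odd
  have hq5 : q ≠ 5 := by rintro rfl; simp at h5
  -- 5 ≠ 0 in ZMod q
  have h5ne : (5 : ZMod q) ≠ 0 := by
    intro h
    have : q ∣ 5 := by
      have := (ZMod.natCast_eq_zero_iff 5 q).mp (by exact_mod_cast h)
      exact this
    exact hq5 ((Nat.prime_dvd_prime_iff_eq hq (by norm_num)).mp this)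
  -- legendre symbol of 5 mod q is -1
  haveI : Fact (Nat.Prime 5) := ⟨by norm_num⟩
  have hleg : legendreSym q 5 = -1 := by
    have hrec : legendreSym q 5 = legendreSym 5 q :=
      legendreSym.quadratic_reciprocity_one_mod_four (by norm_num) hq2
    have hmod : legendreSym 5 (q : ℤ) = legendreSym 5 ((q % 5 : ℕ) : ℤ) := by
      rw [legendreSym.mod]
      congr 1
    rw [hrec, hmod]
    rcases h5 with h | h <;> rw [h]
    · exact (legendreSym.eq_neg_one_iff' (p := 5) (a := 2)).mpr aux_two_ns
    · exact (legendreSym.eq_neg_one_iff' (p := 5) (a := 3)).mpr aux_three_ns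
  have hns : ¬ IsSquare (5 : ZMod q) := by
    have := (legendreSym.eq_neg_one_iff q (a := 5)).mp hleg
    simpa using this
  have heuler : (5 : ZMod q) ^ (q / 2) = -1 := by
    have := legendreSym.eq_pow q 5
    rw [hleg] at this
    push_cast at this
    exact this.symm
  -- the polynomial X^2 - 5
  set P : (ZMod q)[X] := X ^ 2 - C 5 with hP
  have hmonic : P.Monic := by
    apply Polynomial.monic_X_pow_sub_C _ (by norm_num)
  have hdeg : P.natDegree = 2 := by
    simp [hP, Polynomial.natDegree_X_pow_sub_C]
  have hirr : Irreducible P := by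
    rw [hmonic.irreducible_iff_roots_eq_zero_of_degree_le_three (by omega) (by omega)]
    rw [Multiset.eq_zero_iff_forall_notMem]
    intro r hr
    rw [Polynomial.mem_roots hmonic.ne_zero] at hr
    apply hns
    have : r ^ 2 - 5 = 0 := by simpa [hP, Polynomial.IsRoot] using hr
    exact ⟨r, by linear_combination -this⟩
  haveI : Fact (Irreducible P) := ⟨hirr⟩
  set K := AdjoinRoot P with hK
  have hinj : Function.Injective (algebraMap (ZMod q) K) :=
    (algebraMap (ZMod q) K).injective
  haveI : CharP K q := charP_of_injective_ringHom hinj q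
  set s : K := AdjoinRoot.root P with hsdef
  have hs : s ^ 2 = 5 := by
    have h0 : s ^ 2 - AdjoinRoot.of P 5 = 0 := by
      have := AdjoinRoot.eval₂_root P
      simpa [hP] using this
    have : s ^ 2 = AdjoinRoot.of P 5 := by linear_combination h0
    rw [this]; simp [map_ofNat]
  have h2ne : (2 : K) ≠ 0 := by
    intro h
    have := (CharP.cast_eq_zero_iff K q 2).mp (by exact_mod_cast h)
    exact hq2 ((Nat.prime_dvd_prime_iff_eq hq (by norm_num)).mp this)
  have h5Kne : (5 : K) ≠ 0 := by
    intro h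
    apply h5ne
    apply hinj
    rw [map_ofNat, map_zero, h]
  have hsne : s ≠ 0 := by
    intro h; apply h5Kne; rw [← hs, h]; ring
  set α : K := (1 + s) / 2 with hα
  set β : K := (1 - s) / 2 with hβ
  have hsum : α + β = 1 := by rw [hα, hβ, ← add_div, div_eq_iff h2ne]; ring
  have hprod : α * β = -1 := by
    rw [hα, hβ, div_mul_div_comm, div_eq_iff (mul_ne_zero h2ne h2ne)]
    linear_combination -hs
  have hdiff : α - β = s := by rw [hα, hβ, ← sub_div, div_eq_iff h2ne]; ring
  have hα2 : α ^ 2 = α + 1 := by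
    have : α ^ 2 = α * (α + β) - α * β := by ring
    rw [this, hsum, hprod]; ring
  have hβ2 : β ^ 2 = β + 1 := by
    have : β ^ 2 = β * (α + β) - α * β := by ring
    rw [this, hsum, hprod]; ring
  -- Binet
  have binet : ∀ n : ℕ, (Nat.fib n : K) * s = α ^ n - β ^ n := by
    intro n
    induction n using Nat.twoStepInduction with
    | zero => simp
    | one => simpa using hdiff.symm
    | more n ih1 ih2 =>
      have eα : α ^ (n + 2) = α ^ (n + 1) + α ^ n := by
        have : α ^ (n + 2) = α ^ n * α ^ 2 := by ring
        rw [this, hα2]; ring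
      have eβ : β ^ (n + 2) = β ^ (n + 1) + β ^ n := by
        have : β ^ (n + 2) = β ^ n * β ^ 2 := by ring
        rw [this, hβ2]; ring
      rw [Nat.fib_add_two, eα, eβ]
      push_cast
      linear_combination ih1 + ih2
  -- Frobenius
  have hqodd : Odd q := hq.odd_of_ne_two hq2
  have h5K : (5 : K) ^ (q / 2) = -1 := by
    have := congrArg (algebraMap (ZMod q) K) heuler
    simpa [map_pow, map_ofNat] using this
  have hsq : s ^ q = -s := by
    have h1 : s ^ q = (s ^ 2) ^ (q / 2) * s := by
      rw [← pow_mul, ← pow_succ]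
      congr 1
      obtain ⟨k, hk⟩ := hqodd
      omega
    rw [h1, hs, h5K]; ring
  have h2q : (2 : K) ^ q = 2 := by
    have h := add_pow_char (R := K) 1 1 q
    have h11 : (1 : K) + 1 = 2 := by norm_num
    rw [h11, one_pow] at h
    rw [h]
    norm_num
  have hαq : α ^ q = β := by
    rw [hα, hβ, div_pow, add_pow_char, h2q, one_pow, hsq]
    ring
  have hβq : β ^ q = α := by
    have hneg : (-s) ^ q = s := by rw [hqodd.neg_pow, hsq]; ring
    rw [hβ, hα, div_pow, sub_eq_add_neg, add_pow_char, h2q, one_pow, hneg]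
  have h0 : (Nat.fib (q + 1) : K) * s = 0 := by
    rw [binet (q + 1), pow_succ, pow_succ, hαq, hβq]
    ring
  have hK0 : (Nat.fib (q + 1) : K) = 0 := by
    rcases mul_eq_zero.mp h0 with h | h
    · exact h
    · exact absurd h hsne
  have hZ0 : (Nat.fib (q + 1) : ZMod q) = 0 := by
    apply hinj
    rw [map_natCast, map_zero]
    exact hK0
  exact (ZMod.natCast_eq_zero_iff _ _).mp hZ0
end

section
/- Let q > 2 be a prime with q ≡ ±2 (mod 5). Then there exists a positive integer N such that C^N ≡ −I (mod q), where C = [[0,1],[1,1]] is the Fibonacci companion matrix. -/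
private lemma zmod5_ns2 : ¬ IsSquare (2 : ZMod 5) := by decide
private lemma zmod5_ns3 : ¬ IsSquare (3 : ZMod 5) := by decide

theorem exists_companion_pow_neg_one_of_pm_two_mod_five (q : ℕ) (hq : q.Prime) (hq2 : 2 < q)
    (h5 : q % 5 = 2 ∨ q % 5 = 3) :
    ∃ N : ℕ, 0 < N ∧
      (!![0, 1; 1, 1] : Matrix (Fin 2) (Fin 2) (ZMod q)) ^ N = -1 := by
  haveI : Fact q.Prime := ⟨hq⟩
  haveI : Fact (Nat.Prime 5) := ⟨by norm_num⟩
  set C : Matrix (Fin 2) (Fin 2) (ZMod q) := !![0, 1; 1, 1] with hC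
  have hqodd : q % 2 = 1 := by
    rcases hq.eq_two_or_odd with h | h
    · omega
    · exact h
  have hq5 : q ≠ 5 := by omega
  set φ : ZMod q →+* Matrix (Fin 2) (Fin 2) (ZMod q) :=
    algebraMap (ZMod q) (Matrix (Fin 2) (Fin 2) (ZMod q)) with hφ
  -- 5 is not a square mod q
  have hns : ¬ IsSquare (((5 : ℕ) : ZMod q)) := by
    rw [← ZMod.exists_sq_eq_prime_iff_of_mod_four_eq_one (by norm_num) (by omega : q ≠ 2)]
    have h1 : ((q : ℕ) : ZMod 5) = ((q % 5 : ℕ) : ZMod 5) := (ZMod.natCast_mod q 5).symm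
    rw [h1]
    rcases h5 with h | h <;> rw [h]
    · have e : ((2 : ℕ) : ZMod 5) = 2 := by norm_num
      rw [e]; exact zmod5_ns2
    · have e : ((3 : ℕ) : ZMod 5) = 3 := by norm_num
      rw [e]; exact zmod5_ns3
  have h5ne : ((5 : ℕ) : ZMod q) ≠ 0 := by
    intro h
    have hd := (ZMod.natCast_eq_zero_iff 5 q).mp h
    have := (Nat.prime_dvd_prime_iff_eq hq (by norm_num)).mp hd
    omega
  have heuler : ((5 : ℕ) : ZMod q) ^ (q / 2) = -1 := by
    rcases ZMod.pow_div_two_eq_neg_one_or_one (p := q) h5ne with h | h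
    · exact absurd ((ZMod.euler_criterion q h5ne).mpr h) hns
    · exact h
  -- C^2 = C + 1
  have hC2 : C ^ 2 = C + 1 := by
    rw [hC]
    ext i j
    fin_cases i <;> fin_cases j <;>
      simp [pow_two, Matrix.mul_apply, Fin.sum_univ_succ, Matrix.one_apply]
  -- D := 2C - 1, D^2 = 5
  set D : Matrix (Fin 2) (Fin 2) (ZMod q) := 2 * C - 1 with hD
  have h5mat : ((5 : ℕ) : Matrix (Fin 2) (Fin 2) (ZMod q)) = φ ((5 : ℕ) : ZMod q) :=
    (map_natCast φ 5).symm
  have h2mat : ((2 : ℕ) : Matrix (Fin 2) (Fin 2) (ZMod q)) = φ ((2 : ℕ) : ZMod q) :=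
    (map_natCast φ 2).symm
  have hD2 : D ^ 2 = ((5 : ℕ) : Matrix (Fin 2) (Fin 2) (ZMod q)) := by
    have e1 : D ^ 2 = 4 * (C ^ 2) - 4 * C + 1 := by rw [hD]; noncomm_ring
    have e5 : ((5 : ℕ) : Matrix (Fin 2) (Fin 2) (ZMod q)) = 5 := by norm_num
    rw [e1, hC2, e5]
    noncomm_ring
    simp
  -- D^q = -D
  have hq21 : 2 * (q / 2) + 1 = q := by omega
  have hDq : D ^ q = -D := by
    calc D ^ q = (D ^ 2) ^ (q / 2) * D := by rw [← pow_mul, ← pow_succ, hq21]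
    _ = φ (((5 : ℕ) : ZMod q) ^ (q / 2)) * D := by rw [hD2, h5mat, map_pow]
    _ = φ (-1) * D := by rw [heuler]
    _ = -D := by rw [map_neg, map_one, neg_mul, one_mul]
  -- Frobenius: D^q = 2 * C^q - 1
  have hcC : Commute ((2 : ℕ) : Matrix (Fin 2) (Fin 2) (ZMod q)) C := by
    rw [h2mat]; exact Algebra.commutes _ C
  have hcomm : Commute (((2 : ℕ) : Matrix (Fin 2) (Fin 2) (ZMod q)) * C)
      (-1 : Matrix (Fin 2) (Fin 2) (ZMod q)) := by
    simp [Commute, SemiconjBy]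
  have hfrob : D ^ q = ((2 : ℕ) : Matrix (Fin 2) (Fin 2) (ZMod q)) * C ^ q - 1 := by
    have h1 : D = ((2 : ℕ) : Matrix (Fin 2) (Fin 2) (ZMod q)) * C + (-1) := by
      rw [hD]; push_cast; noncomm_ring
    rw [h1, add_pow_char_of_commute _ hcomm]
    have h2 : ((-1 : Matrix (Fin 2) (Fin 2) (ZMod q))) ^ q = -1 :=
      Odd.neg_one_pow ⟨q / 2, by omega⟩
    have h2q : ((2 : ℕ) : Matrix (Fin 2) (Fin 2) (ZMod q)) ^ q
        = ((2 : ℕ) : Matrix (Fin 2) (Fin 2) (ZMod q)) := by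
      rw [h2mat, ← map_pow, ZMod.pow_card]
    rw [h2, hcC.mul_pow, h2q]
    noncomm_ring
  -- Conclude C^q = 1 - C
  have h2ne : ((2 : ℕ) : ZMod q) ≠ 0 := by
    intro h
    have hd := (ZMod.natCast_eq_zero_iff 2 q).mp h
    have := (Nat.prime_dvd_prime_iff_eq hq (by norm_num)).mp hd
    omega
  have h2Z : (2 : ZMod q) ≠ 0 := by
    intro h
    apply h2ne
    rw [show ((2 : ℕ) : ZMod q) = 2 by norm_num, h]
  have hCq : C ^ q = 1 - C := by
    have hsm : ∀ M : Matrix (Fin 2) (Fin 2) (ZMod q),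
        (2 : Matrix (Fin 2) (Fin 2) (ZMod q)) * M = (2 : ZMod q) • M := by
      intro M
      rw [show (2 : Matrix (Fin 2) (Fin 2) (ZMod q)) = φ (2 : ZMod q) from
        (map_ofNat φ 2).symm, ← Algebra.smul_def]
    have h1 : ((2 : ℕ) : Matrix (Fin 2) (Fin 2) (ZMod q)) * C ^ q - 1 = -D := by
      rw [← hfrob, hDq]
    have h2' : ((2 : ℕ) : Matrix (Fin 2) (Fin 2) (ZMod q)) = 2 := by norm_num
    rw [hD, h2'] at h1
    have h2 : (2 : Matrix (Fin 2) (Fin 2) (ZMod q)) * C ^ q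
        = (2 : Matrix (Fin 2) (Fin 2) (ZMod q)) * (1 - C) := by
      calc (2 : Matrix (Fin 2) (Fin 2) (ZMod q)) * C ^ q
          = (2 * C ^ q - 1) + 1 := by noncomm_ring
        _ = -(2 * C - 1) + 1 := by rw [h1]
        _ = 2 * (1 - C) := by noncomm_ring
    rw [hsm, hsm] at h2
    have := congrArg (fun M => (2 : ZMod q)⁻¹ • M) h2
    simpa [smul_smul, inv_mul_cancel₀ h2Z] using this
  refine ⟨q + 1, Nat.succ_pos _, ?_⟩
  rw [pow_succ, hCq, sub_mul, one_mul, ← pow_two, hC2]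
  noncomm_ring
end

section
/- Let q be a prime with q ≡ −1 (mod 20) or q ≡ 11 (mod 20). Then for every positive integer N, C^N ≢ −I (mod q), where C = [[0,1],[1,1]]. Consequently, such a prime q divides no Fibonacci number F_{2n−1} with n ≥ 3. -/
theorem no_midy_of_mod_twenty (q : ℕ) (hq : q.Prime)
    (h20 : q % 20 = 19 ∨ q % 20 = 11) :
    (∀ N : ℕ, 1 ≤ N →
      (!![0, 1; 1, 1] : Matrix (Fin 2) (Fin 2) (ZMod q)) ^ N ≠ -1) ∧
    (∀ n : ℕ, 3 ≤ n → ¬ q ∣ Nat.fib (2 * n - 1)) := by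
  have hfact : Fact q.Prime := ⟨hq⟩
  have hq4 : q % 4 = 3 := by omega
  have hq5 : q % 5 = 4 ∨ q % 5 = 1 := by omega
  have hq2' : q ≠ 2 := by omega
  have hq2 : (2 : ZMod q) ≠ 0 := by
    have : ((2 : ℕ) : ZMod q) ≠ 0 := by
      rw [Ne, ZMod.natCast_eq_zero_iff]
      intro h
      have := Nat.le_of_dvd (by norm_num) h
      omega
    simpa using this
  have hnsq : ¬ IsSquare (-1 : ZMod q) := by
    rw [ZMod.exists_sq_eq_neg_one_iff]
    simp [hq4]
  constructor
  · -- part 1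
    intro N hN h
    -- 5 is a square mod q
    have h5 : IsSquare ((5 : ℕ) : ZMod q) := by
      have f5 : Fact (Nat.Prime 5) := ⟨by norm_num⟩
      have hiff := ZMod.exists_sq_eq_prime_iff_of_mod_four_eq_one (p := 5) (q := q)
        (by norm_num) hq2'
      rw [← hiff]
      have hcast : ((q : ℕ) : ZMod 5) = ((q % 5 : ℕ) : ZMod 5) := by
        rw [ZMod.natCast_mod]
      rw [hcast]
      rcases hq5 with h' | h'
      · rw [h']
        have h4 : ((4 : ℕ) : ZMod 5) = 2 * 2 := by norm_num
        exact ⟨2, h4⟩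
      · rw [h']
        have h1 : ((1 : ℕ) : ZMod 5) = 1 * 1 := by norm_num
        exact ⟨1, h1⟩
    obtain ⟨s, hs⟩ := h5
    have hs' : s * s = 5 := by
      have h5c : ((5 : ℕ) : ZMod q) = (5 : ZMod q) := by push_cast; ring
      rw [h5c] at hs
      exact hs.symm
    have hroot : ((1 + s) * (2 : ZMod q)⁻¹) * ((1 + s) * (2 : ZMod q)⁻¹)
        = ((1 + s) * (2 : ZMod q)⁻¹) + 1 := by
      field_simp
      linear_combination hs'
    obtain ⟨φ, hφ⟩ : ∃ φ : ZMod q, φ * φ = φ + 1 := ⟨_, hroot⟩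
    have hmul : (!![0, 1; 1, 1] : Matrix (Fin 2) (Fin 2) (ZMod q)).mulVec ![1, φ]
        = φ • ![1, φ] := by
      funext i
      fin_cases i
      · simp [Matrix.mulVec, dotProduct, Fin.sum_univ_two]
      · simp [Matrix.mulVec, dotProduct, Fin.sum_univ_two]
        linear_combination -hφ
    have hpow : ∀ M : ℕ, ((!![0, 1; 1, 1] : Matrix (Fin 2) (Fin 2) (ZMod q)) ^ M).mulVec ![1, φ]
        = (φ ^ M) • ![1, φ] := by
      intro M
      induction M with
      | zero => simp
      | succ k ih =>
        rw [pow_succ, ← Matrix.mulVec_mulVec, hmul, Matrix.mulVec_smul, ih,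
          smul_smul, pow_succ]
        ring_nf
    have hφN : φ ^ N = -1 := by
      have h0 := congrFun (h ▸ hpow N) 0
      simp [Matrix.mulVec, dotProduct, Fin.sum_univ_two] at h0
      exact h0.symm
    -- determinant gives N even
    have hdet : ((-1 : ZMod q)) ^ N = 1 := by
      have hd := congrArg Matrix.det h
      rw [Matrix.det_pow] at hd
      rw [show ((!![0, 1; 1, 1] : Matrix (Fin 2) (Fin 2) (ZMod q)).det) = -1 by
        simp [Matrix.det_fin_two_of]] at hd
      rw [hd,
        show (-1 : Matrix (Fin 2) (Fin 2) (ZMod q)) = -(1 : Matrix (Fin 2) (Fin 2) (ZMod q)) from rfl,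
        Matrix.det_neg]
      simp
    have hNeven : Even N := by
      rcases Nat.even_or_odd N with hE | hO
      · exact hE
      · rw [hO.neg_one_pow] at hdet
        exact absurd hdet (by
          intro h1
          exact hq2 (by linear_combination -h1))
    obtain ⟨M, hM⟩ := hNeven
    exact hnsq ⟨φ ^ M, by rw [← hφN, hM, pow_add]⟩
  · -- part 2
    intro n hn hdvd
    have hidx : 2 * n - 1 = 2 * (n - 1) + 1 := by omega
    rw [hidx, Nat.fib_two_mul_add_one] at hdvd
    have hsucc : n - 1 + 1 = n := by omega
    rw [hsucc] at hdvd
    have hcop : Nat.Coprime (Nat.fib (n - 1)) (Nat.fib n) := by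
      have := Nat.fib_coprime_fib_succ (n - 1)
      rwa [hsucc] at this
    set a : ZMod q := (Nat.fib n : ZMod q) with ha
    set b : ZMod q := (Nat.fib (n - 1) : ZMod q) with hb
    have hsum : a ^ 2 + b ^ 2 = 0 := by
      have : ((Nat.fib n ^ 2 + Nat.fib (n - 1) ^ 2 : ℕ) : ZMod q) = 0 := by
        rw [ZMod.natCast_eq_zero_iff]
        exact hdvd
      push_cast at this
      exact this
    have hb0 : b ≠ 0 := by
      intro h0
      rw [hb, ZMod.natCast_eq_zero_iff] at h0
      have hb2 : q ∣ Nat.fib (n - 1) ^ 2 := dvd_pow h0 two_ne_zero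
      have ha2 : q ∣ Nat.fib n ^ 2 := (Nat.dvd_add_right hb2).mp (by rwa [Nat.add_comm] at hdvd)
      have ha0 : q ∣ Nat.fib n := hq.dvd_of_dvd_pow ha2
      have : q ∣ 1 := hcop ▸ Nat.dvd_gcd h0 ha0
      have := Nat.le_of_dvd one_pos this
      have := hq.two_le
      omega
    apply hnsq
    refine ⟨a * b⁻¹, ?_⟩
    field_simp
    linear_combination -hsum
end
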